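/- For complex ω with 1 < Im(ω) < 3 and complex η with Im(η) > 0, the two-dimensional Fourier transform ∫_{ℝ} ∫_0^∞ e^{iωx + iηy} · (e^x − N√(y/T))⁺ dy dx equals (N/√T)^{1+iω} · Γ((3+iω)/2) · (−iη)^{−3/2 − iω/2} / (iω − ω²). -/

import Mathlib

open MeasureTheory Complex Set Real Filter

lemma norm_cexp_mul' (c : ℂ) (x : ℝ) : ‖Complex.exp (c * x)‖ = Real.exp (c.re * x) := by
  rw [Complex.norm_exp]
  norm_num

lemma exp_c_integrableOn {c : ℂ} (hc : c.re < 0) (a : ℝ) :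
    IntegrableOn (fun x : ℝ => Complex.exp (c * x)) (Ioi a) := by
  have hb : (0:ℝ) < -c.re := by linarith
  refine (exp_neg_integrableOn_Ioi a hb).mono'
    ((Complex.continuous_exp.comp (continuous_const.mul Complex.continuous_ofReal)).aestronglyMeasurable)
    (Filter.Eventually.of_forall fun x => ?_)
  rw [norm_cexp_mul']
  simp

lemma integral_exp_c_Ioi {c : ℂ} (hc : c.re < 0) (a : ℝ) :
    ∫ x in Ioi a, Complex.exp (c * x) = -Complex.exp (c * a) / c := by
  have hc0 : c ≠ 0 := fun h => by simp [h] at hc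
  have hderiv : ∀ x ∈ Ioi a, HasDerivAt (fun x : ℝ => Complex.exp (c * x) / c)
      (Complex.exp (c * x)) x := by
    intro x _
    have h1 : HasDerivAt (fun z : ℂ => Complex.exp (c * z)) (Complex.exp (c * x) * c) (x : ℂ) := by
      exact ((Complex.hasDerivAt_exp (c * x)).comp (x:ℂ)
        ((hasDerivAt_id (x:ℂ)).const_mul c)).congr_deriv (by ring)
    have := (h1.comp_ofReal).div_const c
    simpa [mul_div_cancel_right₀ _ hc0] using this
  have htend : Tendsto (fun x : ℝ => Complex.exp (c * x) / c) atTop (nhds 0) := by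
    rw [tendsto_zero_iff_norm_tendsto_zero]
    have : (fun x : ℝ => ‖Complex.exp (c * x) / c‖) = fun x => Real.exp (c.re * x) / ‖c‖ := by
      funext x; rw [norm_div, norm_cexp_mul']
    rw [this]
    have h2 : Tendsto (fun x : ℝ => Real.exp (c.re * x)) atTop (nhds 0) :=
      Real.tendsto_exp_atBot.comp (tendsto_id.const_mul_atTop_of_neg hc)
    simpa using h2.div_const ‖c‖
  have hcont : ContinuousWithinAt (fun x : ℝ => Complex.exp (c * x) / c) (Ici a) a :=
    (((Complex.continuous_exp.comp (continuous_const.mul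
      Complex.continuous_ofReal)).div_const c).continuousAt).continuousWithinAt
  have := integral_Ioi_of_hasDerivAt_of_tendsto hcont hderiv (exp_c_integrableOn hc a) htend
  rw [this]; ring

lemma integrableOn_rpow_exp {p δ : ℝ} (hp : -1 < p) (hδ : 0 < δ) :
    IntegrableOn (fun t : ℝ => t ^ p * Real.exp (-(δ * t))) (Ioi 0) := by
  have h0 := Real.GammaIntegral_convergent (by linarith : 0 < p + 1)
  have h1 : IntegrableOn (fun t : ℝ => Real.exp (-(δ * t)) * (δ * t) ^ p) (Ioi 0) := by
    have := (integrableOn_Ioi_comp_mul_left_iff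
      (fun x : ℝ => Real.exp (-x) * x ^ (p + 1 - 1)) 0 hδ).mpr (by simpa using h0)
    simpa [mul_zero] using this
  refine (h1.const_mul (δ ^ p)⁻¹).congr ?_
  rw [EventuallyEq, ae_restrict_iff' measurableSet_Ioi]
  filter_upwards with t ht
  rw [Real.mul_rpow hδ.le (le_of_lt ht)]
  field_simp [ne_of_gt (Real.rpow_pos_of_pos hδ p)]

lemma cpow_aesm (s : ℂ) : AEStronglyMeasurable (fun t : ℝ => (t : ℂ) ^ (s - 1))
    (volume.restrict (Ioi 0)) := by
  refine ContinuousOn.aestronglyMeasurable ?_ measurableSet_Ioi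
  apply continuousOn_of_forall_continuousAt
  intro x hx
  exact (continuousAt_cpow_const (Complex.ofReal_mem_slitPlane.2 hx)).comp
    Complex.continuous_ofReal.continuousAt

lemma mellin_exp_integrable {s : ℂ} (hs : 0 < s.re) {z : ℂ} (hz : 0 < z.re) :
    IntegrableOn (fun t : ℝ => (t : ℂ) ^ (s - 1) * Complex.exp (-(z * t))) (Ioi 0) := by
  refine (integrableOn_rpow_exp (by linarith : (-1:ℝ) < s.re - 1) hz).mono'
    ((cpow_aesm s).mul ((Complex.continuous_exp.comp
      ((continuous_const.mul Complex.continuous_ofReal).neg)).aestronglyMeasurable)) ?_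
  rw [ae_restrict_iff' measurableSet_Ioi]
  filter_upwards with t ht
  rw [norm_mul, Complex.norm_exp,
    Complex.norm_cpow_eq_rpow_re_of_pos ht]
  simp [Real.exp_le_exp, mul_comm]

lemma mellin_cexp {s : ℂ} (hs : 0 < s.re) {z : ℂ} (hz : 0 < z.re) :
    ∫ t : ℝ in Ioi 0, (t : ℂ) ^ (s - 1) * Complex.exp (-(z * t)) =
      Complex.Gamma s * z ^ (-s) := by
  set U : Set ℂ := {w : ℂ | 0 < w.re} with hU
  set f : ℂ → ℂ := fun w => ∫ t : ℝ in Ioi 0, (t : ℂ) ^ (s - 1) * Complex.exp (-(w * t)) with hf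
  set g : ℂ → ℂ := fun w => Complex.Gamma s * w ^ (-s) with hg
  have hUopen : IsOpen U := isOpen_lt continuous_const Complex.continuous_re
  have hUconn : IsPreconnected U := (convex_halfSpace_re_gt 0).isPreconnected
  -- f has a derivative at each point of U
  have hfdiff : ∀ w ∈ U, DifferentiableAt ℂ f w := by
    intro w hw
    have hwre : 0 < w.re := hw
    set ε : ℝ := w.re / 2 with hε
    have hε0 : 0 < ε := by positivity
    have key := hasDerivAt_integral_of_dominated_loc_of_deriv_le (μ := volume.restrict (Ioi 0))
      (F := fun w (t : ℝ) => (t : ℂ) ^ (s - 1) * Complex.exp (-(w * t)))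
      (F' := fun w (t : ℝ) => (t : ℂ) ^ (s - 1) * (-(t : ℂ) * Complex.exp (-(w * t))))
      (bound := fun t : ℝ => t ^ s.re * Real.exp (-(ε * t))) (x₀ := w) (Metric.ball_mem_nhds w hε0)
      ?_ ?_ ?_ ?_ ?_ ?_
    · rw [hf]; exact key.2.differentiableAt
    · filter_upwards with v
      exact ((cpow_aesm s).mul ((Complex.continuous_exp.comp
        ((continuous_const.mul Complex.continuous_ofReal).neg)).aestronglyMeasurable))
    · exact mellin_exp_integrable hs hwre
    · exact ((cpow_aesm s).mul (((continuous_ofReal.neg).mul (Complex.continuous_exp.comp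
        ((continuous_const.mul Complex.continuous_ofReal).neg))).aestronglyMeasurable))
    · rw [ae_restrict_iff' measurableSet_Ioi]
      filter_upwards with t ht
      intro v hv
      have hvre : ε ≤ v.re := by
        have h1 : |v.re - w.re| ≤ ‖v - w‖ := by
          simpa using Complex.abs_re_le_norm (v - w)
        have h2 : ‖v - w‖ < ε := by simpa [Metric.mem_ball, dist_eq_norm] using hv
        have := abs_le.mp h1
        have hle : w.re - ‖v - w‖ ≤ v.re := by linarith [this.1]
        have : w.re - ε ≤ v.re := by linarith
        simpa [hε] using by linarith
      rw [norm_mul, norm_mul,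
        Complex.norm_cpow_eq_rpow_re_of_pos ht,
        Complex.norm_exp]
      have h1 : ‖(-(t:ℂ))‖ = t := by
        simp [abs_of_pos (show (0:ℝ) < t from ht)]
      rw [h1]
      have h2 : (-(v * (t:ℂ))).re = -(v.re * t) := by simp
      rw [h2]
      have h3 : Real.exp (-(v.re * t)) ≤ Real.exp (-(ε * t)) := by
        apply Real.exp_le_exp.2
        have := mul_le_mul_of_nonneg_right hvre ht.le
        linarith
      calc t ^ (s.re - 1) * (t * Real.exp (-(v.re * t)))
          = t ^ (s.re - 1) * t * Real.exp (-(v.re * t)) := by ring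
        _ = t ^ s.re * Real.exp (-(v.re * t)) := by
            rw [← Real.rpow_add_one (ne_of_gt ht), sub_add_cancel]
        _ ≤ t ^ s.re * Real.exp (-(ε * t)) := by
            apply mul_le_mul_of_nonneg_left h3 (Real.rpow_nonneg ht.le _)
    · exact integrableOn_rpow_exp (by linarith : (-1:ℝ) < s.re) hε0
    · rw [ae_restrict_iff' measurableSet_Ioi]
      filter_upwards with t ht
      intro v hv
      have hd : HasDerivAt (fun w : ℂ => Complex.exp (-(w * t)))
          (-(t:ℂ) * Complex.exp (-(v * t))) v := by
        have h1 : HasDerivAt (fun w : ℂ => -(w * (t:ℂ))) (-(t:ℂ)) v := by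
          exact ((hasDerivAt_id v).mul_const (t:ℂ)).neg.congr_deriv (by ring)
        exact ((Complex.hasDerivAt_exp (-(v * t))).comp v h1).congr_deriv (by ring)
      exact hd.const_mul _
  have hfdo : DifferentiableOn ℂ f U := fun w hw => (hfdiff w hw).differentiableWithinAt
  have hfan : AnalyticOnNhd ℂ f U := hfdo.analyticOnNhd hUopen
  have hgan : AnalyticOnNhd ℂ g U := by
    apply DifferentiableOn.analyticOnNhd _ hUopen
    intro w hw
    exact (((Complex.hasStrictDerivAt_cpow_const
      (Complex.mem_slitPlane_iff.mpr (Or.inl hw))).hasDerivAt.differentiableAt.const_mul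
      (Complex.Gamma s)).differentiableWithinAt)
  -- agreement on positive reals
  have hreal : ∀ r : ℝ, 0 < r → f r = g r := by
    intro r hr
    have h0 := Complex.integral_cpow_mul_exp_neg_mul_Ioi hs hr
    have hrne : (r : ℂ) ≠ 0 := Complex.ofReal_ne_zero.2 (ne_of_gt hr)
    have harg : (r : ℂ).arg ≠ Real.pi := by
      rw [Complex.arg_ofReal_of_nonneg hr.le]
      exact ne_of_lt Real.pi_pos
    rw [hf, hg]
    simp only
    calc (∫ t : ℝ in Ioi 0, (t : ℂ) ^ (s - 1) * Complex.exp (-((r:ℂ) * t)))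
        = (1 / (r:ℂ)) ^ s * Complex.Gamma s := h0
      _ = Complex.Gamma s * (r:ℂ) ^ (-s) := by
          rw [one_div, Complex.inv_cpow _ _ harg, ← Complex.cpow_neg, mul_comm]
  -- frequently equal near 1
  have hfreq : ∃ᶠ w in nhdsWithin (1 : ℂ) {(1:ℂ)}ᶜ, f w = g w := by
    have hseq : Tendsto (fun n : ℕ => ((1 + ((n:ℝ)+1)⁻¹ : ℝ) : ℂ)) atTop
        (nhdsWithin (1 : ℂ) {(1:ℂ)}ᶜ) := by
      apply tendsto_nhdsWithin_of_tendsto_nhds_of_eventually_within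
      · have : Tendsto (fun n : ℕ => (1 + ((n:ℝ)+1)⁻¹ : ℝ)) atTop (nhds 1) := by
          simpa using (tendsto_const_nhds (x := (1:ℝ))).add tendsto_one_div_add_atTop_nhds_zero_nat
        have h2 : Tendsto (fun n : ℕ => ((1 + ((n:ℝ)+1)⁻¹ : ℝ) : ℂ)) atTop
            (nhds (((1:ℝ) : ℂ))) := (Complex.continuous_ofReal.tendsto 1).comp this
        simpa using h2
      · filter_upwards with n
        simp only [Set.mem_compl_iff, Set.mem_singleton_iff]
        intro h
        have : (1 + ((n:ℝ)+1)⁻¹ : ℝ) = 1 := by exact_mod_cast Complex.ofReal_injective h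
        nlinarith [inv_pos.2 (by positivity : (0:ℝ) < (n:ℝ)+1), this]
    apply hseq.frequently
    apply Frequently.of_forall
    intro n
    exact hreal _ (by positivity)
  have h1U : (1 : ℂ) ∈ U := by simp [hU]
  have := hfan.eqOn_of_preconnected_of_frequently_eq hgan hUconn h1U hfreq
  exact this hz

lemma inner_x {A : ℝ} (hA : 0 < A) {ω : ℂ} (h1 : 1 < ω.im) :
    ∫ x : ℝ, Complex.exp (I * ω * x) * ((max (Real.exp x - A) 0 : ℝ) : ℂ) =
      (A : ℂ) ^ (1 + I * ω) / (I * ω - ω ^ 2) := by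
  have hre1 : (I * ω).re = -ω.im := by simp
  have hre2 : (1 + I * ω).re = 1 - ω.im := by simp [sub_eq_add_neg]
  have hc1 : (I * ω).re < 0 := by rw [hre1]; linarith
  have hc2 : (1 + I * ω).re < 0 := by rw [hre2]; linarith
  have hne1 : I * ω ≠ 0 := fun h => by simp [h] at hc1
  have hne2 : (1 : ℂ) + I * ω ≠ 0 := fun h => by simp [h] at hc2
  set a : ℝ := Real.log A with ha
  have hexpa : Real.exp a = A := Real.exp_log hA
  have hzero : ∀ x : ℝ, x ∉ Ioi a →
      Complex.exp (I * ω * x) * ((max (Real.exp x - A) 0 : ℝ) : ℂ) = 0 := by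
    intro x hx
    have : Real.exp x ≤ A := by
      rw [← hexpa]; exact Real.exp_le_exp.2 (not_lt.1 hx)
    have : max (Real.exp x - A) 0 = 0 := max_eq_right (by linarith)
    rw [this]; simp
  rw [← setIntegral_eq_integral_of_forall_compl_eq_zero hzero]
  have hcongr : ∫ x in Ioi a, Complex.exp (I * ω * x) * ((max (Real.exp x - A) 0 : ℝ) : ℂ) =
      ∫ x in Ioi a, (Complex.exp ((1 + I * ω) * x) - A * Complex.exp (I * ω * x)) := by
    refine setIntegral_congr_fun measurableSet_Ioi (fun x hx => ?_)
    have hgt : A ≤ Real.exp x := by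
      rw [← hexpa]; exact Real.exp_le_exp.2 (le_of_lt hx)
    rw [max_eq_left (by linarith)]
    push_cast
    rw [add_mul, one_mul, Complex.exp_add, ← Complex.ofReal_exp]
    ring
  rw [hcongr, integral_sub (exp_c_integrableOn hc2 a) ((exp_c_integrableOn hc1 a).const_mul _),
    integral_const_mul, integral_exp_c_Ioi hc2 a, integral_exp_c_Ioi hc1 a]
  have hcexpa : Complex.exp ((a : ℂ)) = (A : ℂ) := by
    rw [← Complex.ofReal_exp, hexpa]
  have hAcpow : (A : ℂ) ^ (I * ω) = Complex.exp (I * ω * a) := by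
    rw [Complex.cpow_def_of_ne_zero (Complex.ofReal_ne_zero.2 hA.ne'), ← Complex.ofReal_log hA.le,
      mul_comm]
  have hA1 : (A : ℂ) ^ (1 + I * ω) = (A : ℂ) * Complex.exp (I * ω * a) := by
    rw [Complex.cpow_add _ _ (Complex.ofReal_ne_zero.2 hA.ne'), Complex.cpow_one, hAcpow]
  have hsplit : Complex.exp ((1 + I * ω) * a) = (A : ℂ) * Complex.exp (I * ω * a) := by
    rw [add_mul, one_mul, Complex.exp_add, hcexpa]
  rw [hA1, hsplit]
  have hden : I * ω - ω ^ 2 = (I * ω) * (1 + I * ω) := by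
    ring_nf
    rw [Complex.I_sq]
    ring
  rw [hden]
  have hω : ω ≠ 0 := fun h => by simp [h] at hne1
  field_simp
  ring

lemma integrableOn_exp_mul_Iic' {d : ℝ} (hd : 0 < d) :
    IntegrableOn (fun x : ℝ => Real.exp (d * x)) (Iic (0:ℝ)) := by
  rw [← (Measure.measurePreserving_neg (volume : Measure ℝ)).integrableOn_comp_preimage
      (Homeomorph.neg ℝ).measurableEmbedding]
  simp only [Function.comp_def, neg_preimage, neg_Iic, neg_zero, mul_neg]
  rw [integrableOn_Ici_iff_integrableOn_Ioi]
  exact (exp_neg_integrableOn_Ioi 0 hd).congr_fun (fun x _ => by simp only [neg_mul]) measurableSet_Ioi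

/-- Fourier transform of the volatility struck call payoff
`F(x,y) = (eˣ − N√(y/T))⁺`. -/
theorem stmt3 (N T : ℝ) (hN : 0 < N) (hT : 0 < T) (ω η : ℂ)
    (h1 : 1 < ω.im) (h3 : ω.im < 3) (hη : 0 < η.im) :
    (∫ x : ℝ, ∫ y in Set.Ioi (0:ℝ),
        Complex.exp (I * ω * x + I * η * y) *
          ((max (Real.exp x - N * Real.sqrt (y / T)) 0 : ℝ) : ℂ)) =
      ((N / Real.sqrt T : ℝ) : ℂ) ^ (1 + I * ω) * Complex.Gamma ((3 + I * ω) / 2) *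
        (-I * η) ^ (-(3:ℂ)/2 - I * ω / 2) / (I * ω - ω ^ 2) := by
  have hsT : 0 < Real.sqrt T := Real.sqrt_pos.2 hT
  set K : ℝ := N / Real.sqrt T with hK
  have hKpos : 0 < K := div_pos hN hsT
  set P : ℝ → ℝ → ℂ := fun x y => Complex.exp (I * ω * x + I * η * y) *
    ((max (Real.exp x - N * Real.sqrt (y / T)) 0 : ℝ) : ℂ) with hP
  have hsqrt : ∀ y : ℝ, 0 ≤ y → N * Real.sqrt (y / T) = K * Real.sqrt y := by
    intro y hy
    rw [Real.sqrt_div hy, hK]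
    ring
  have hmax_nonneg : ∀ x y : ℝ, 0 ≤ max (Real.exp x - N * Real.sqrt (y / T)) 0 :=
    fun x y => le_max_right _ _
  have hre : ∀ x y : ℝ, (I * ω * x + I * η * y).re = -(ω.im * x) - η.im * y := by
    intro x y
    simp [Complex.add_re, Complex.mul_re]
    ring
  have hnorm : ∀ x y : ℝ, ‖P x y‖ =
      Real.exp (-(ω.im * x) - η.im * y) * max (Real.exp x - N * Real.sqrt (y / T)) 0 := by
    intro x y
    rw [hP]
    simp only
    rw [norm_mul, Complex.norm_exp, hre, Complex.norm_real,
      Real.norm_eq_abs, _root_.abs_of_nonneg (hmax_nonneg x y)]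
  have hmax_le : ∀ x y : ℝ, max (Real.exp x - N * Real.sqrt (y / T)) 0 ≤ Real.exp x := by
    intro x y
    refine max_le ?_ (Real.exp_pos x).le
    have := mul_nonneg hN.le (Real.sqrt_nonneg (y / T))
    linarith
  have hcont : Continuous fun p : ℝ × ℝ => P p.1 p.2 := by
    apply Continuous.mul
    · exact Complex.continuous_exp.comp (by fun_prop)
    · exact Complex.continuous_ofReal.comp
        (((Real.continuous_exp.comp continuous_fst).sub
          (continuous_const.mul (Real.continuous_sqrt.comp (continuous_snd.div_const T)))).max
          continuous_const)
  -- sections in y are integrable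
  have part1 : ∀ x : ℝ, Integrable (fun y => P x y) (volume.restrict (Ioi 0)) := by
    intro x
    refine Integrable.mono' ((exp_neg_integrableOn_Ioi 0 hη).const_mul
      (Real.exp ((1 - ω.im) * x)))
      ((hcont.comp (Continuous.prodMk_right x)).aestronglyMeasurable)
      (Filter.Eventually.of_forall fun y => ?_)
    rw [hnorm]
    calc Real.exp (-(ω.im * x) - η.im * y) * max (Real.exp x - N * Real.sqrt (y / T)) 0
        ≤ Real.exp (-(ω.im * x) - η.im * y) * Real.exp x :=
          mul_le_mul_of_nonneg_left (hmax_le x y) (Real.exp_pos _).le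
      _ = Real.exp ((1 - ω.im) * x) * Real.exp (-η.im * y) := by
          rw [← Real.exp_add, ← Real.exp_add]; ring_nf
  -- the x ↦ ∫ ‖·‖ function
  set S : ℝ → ℝ := fun x => ∫ y in Ioi (0:ℝ), ‖P x y‖ with hS
  have hSnonneg : ∀ x, 0 ≤ S x := fun x => integral_nonneg fun y => norm_nonneg _
  have hS_aesm : AEStronglyMeasurable S volume := by
    have : AEStronglyMeasurable (fun p : ℝ × ℝ => ‖P p.1 p.2‖)
        (volume.prod (volume.restrict (Ioi 0))) := hcont.norm.aestronglyMeasurable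
    exact this.integral_prod_right'
  have hb1 : ∀ x : ℝ, S x ≤ Real.exp ((1 - ω.im) * x) * (1 / η.im) := by
    intro x
    have hmono : S x ≤ ∫ y in Ioi (0:ℝ), Real.exp ((1 - ω.im) * x) * Real.exp (-η.im * y) := by
      refine setIntegral_mono_on (part1 x).norm
        ((exp_neg_integrableOn_Ioi 0 hη).const_mul _) measurableSet_Ioi (fun y _ => ?_)
      rw [hnorm]
      calc Real.exp (-(ω.im * x) - η.im * y) * max (Real.exp x - N * Real.sqrt (y / T)) 0
          ≤ Real.exp (-(ω.im * x) - η.im * y) * Real.exp x :=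
            mul_le_mul_of_nonneg_left (hmax_le x y) (Real.exp_pos _).le
        _ = Real.exp ((1 - ω.im) * x) * Real.exp (-η.im * y) := by
            rw [← Real.exp_add, ← Real.exp_add]; ring_nf
    refine hmono.trans (le_of_eq ?_)
    rw [integral_const_mul]
    congr 1
    have h5 := integral_comp_mul_left_Ioi (fun u : ℝ => Real.exp (-u)) 0 hη
    simp only [mul_zero, smul_eq_mul] at h5
    rw [show (fun y : ℝ => Real.exp (-η.im * y)) = fun y : ℝ => Real.exp (-(η.im * y)) by
      funext y; rw [neg_mul], h5, integral_exp_neg_Ioi_zero, one_div, mul_one]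
  have hb2 : ∀ x : ℝ, S x ≤ T / N ^ 2 * Real.exp ((3 - ω.im) * x) := by
    intro x
    set Y : ℝ := T * Real.exp x ^ 2 / N ^ 2 with hY
    have hYnn : 0 ≤ Y := by positivity
    have hindint : Integrable ((Ioc (0:ℝ) Y).indicator
        (fun _ => Real.exp ((1 - ω.im) * x))) (volume.restrict (Ioi 0)) := by
      rw [integrable_indicator_iff measurableSet_Ioc]
      refine (integrableOn_const_iff (by finiteness)).2 (Or.inr ?_)
      exact lt_of_le_of_lt (Measure.restrict_apply_le _ _)
        (by rw [Real.volume_Ioc]; exact ENNReal.ofReal_lt_top)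
    have hmono : S x ≤ ∫ y in Ioi (0:ℝ),
        (Ioc (0:ℝ) Y).indicator (fun _ => Real.exp ((1 - ω.im) * x)) y := by
      refine setIntegral_mono_on (part1 x).norm hindint measurableSet_Ioi (fun y hy => ?_)
      rcases le_or_gt y Y with hyY | hyY
      · rw [Set.indicator_of_mem (Set.mem_Ioc.mpr ⟨hy, hyY⟩), hnorm]
        calc Real.exp (-(ω.im * x) - η.im * y) * max (Real.exp x - N * Real.sqrt (y / T)) 0
            ≤ Real.exp (-(ω.im * x) - η.im * y) * Real.exp x :=
              mul_le_mul_of_nonneg_left (hmax_le x y) (Real.exp_pos _).le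
          _ = Real.exp ((1 - ω.im) * x) * Real.exp (-(η.im * y)) := by
              rw [← Real.exp_add, ← Real.exp_add]; ring_nf
          _ ≤ Real.exp ((1 - ω.im) * x) * 1 := by
              refine mul_le_mul_of_nonneg_left ?_ (Real.exp_pos _).le
              rw [← Real.exp_zero]
              exact Real.exp_le_exp.2 (by nlinarith [hy.out, hη])
          _ = Real.exp ((1 - ω.im) * x) := mul_one _
      · rw [Set.indicator_of_notMem (fun hmem => absurd hmem.2 (not_le.2 hyY)), hnorm]
        have hzero : max (Real.exp x - N * Real.sqrt (y / T)) 0 = 0 := by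
          refine max_eq_right ?_
          have h6 : Real.exp x / N ≤ Real.sqrt (y / T) := by
            rw [show Real.exp x / N = Real.sqrt ((Real.exp x / N) ^ 2) from
              (Real.sqrt_sq (by positivity)).symm]
            apply Real.sqrt_le_sqrt
            rw [div_pow, div_le_div_iff₀ (by positivity) hT]
            rw [hY] at hyY
            have h8 := (div_le_iff₀ (by positivity : (0:ℝ) < N ^ 2)).mp hyY.le
            nlinarith [h8]
          have h7 := mul_le_mul_of_nonneg_left h6 hN.le
          rw [mul_div_cancel₀ _ hN.ne'] at h7
          linarith
        rw [hzero, mul_zero]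
    refine hmono.trans (le_of_eq ?_)
    rw [integral_indicator measurableSet_Ioc, Measure.restrict_restrict measurableSet_Ioc,
      Set.inter_eq_self_of_subset_left Ioc_subset_Ioi_self, setIntegral_const, smul_eq_mul,
      measureReal_def, Real.volume_Ioc, ENNReal.toReal_ofReal (by linarith)]
    have e2 : Real.exp x ^ 2 = Real.exp (2 * x) := by
      rw [two_mul, Real.exp_add, sq]
    rw [hY, e2, sub_zero]
    have e3 : T * Real.exp (2 * x) / N ^ 2 * Real.exp ((1 - ω.im) * x)
        = T / N ^ 2 * (Real.exp (2 * x) * Real.exp ((1 - ω.im) * x)) := by ring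
    rw [e3, ← Real.exp_add, show 2 * x + (1 - ω.im) * x = (3 - ω.im) * x by ring]
  -- the dominating function
  set G : ℝ → ℝ := fun x => if x ≤ 0 then T / N ^ 2 * Real.exp ((3 - ω.im) * x)
    else 1 / η.im * Real.exp ((1 - ω.im) * x) with hG
  have hGint : Integrable G := by
    rw [← integrableOn_univ, ← Set.Iic_union_Ioi (a := (0:ℝ)), integrableOn_union]
    constructor
    · have hi : IntegrableOn (fun x : ℝ => T / N ^ 2 * Real.exp ((3 - ω.im) * x)) (Iic 0) :=
        (integrableOn_exp_mul_Iic' (by linarith : (0:ℝ) < 3 - ω.im)).const_mul _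
      refine hi.congr_fun (fun x hx => ?_) measurableSet_Iic
      rw [hG]; simp only; rw [if_pos (show x ≤ 0 from hx)]
    · have hi : IntegrableOn (fun x : ℝ => 1 / η.im * Real.exp (-(ω.im - 1) * x)) (Ioi 0) :=
        (exp_neg_integrableOn_Ioi 0 (by linarith : (0:ℝ) < ω.im - 1)).const_mul _
      refine hi.congr_fun (fun x hx => ?_) measurableSet_Ioi
      rw [hG]; simp only; rw [if_neg (not_le.2 (show 0 < x from hx))]
      ring_nf
  have hSint : Integrable S := by
    refine hGint.mono' hS_aesm (Filter.Eventually.of_forall fun x => ?_)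
    rw [Real.norm_eq_abs, _root_.abs_of_nonneg (hSnonneg x), hG]
    simp only
    split_ifs with hx
    · exact hb2 x
    · exact (hb1 x).trans (le_of_eq (mul_comm _ _))
  -- Fubini
  have hProdInt : Integrable (Function.uncurry P) (volume.prod (volume.restrict (Ioi 0))) := by
    refine (integrable_prod_iff hcont.aestronglyMeasurable).2 ⟨?_, ?_⟩
    · exact Filter.Eventually.of_forall part1
    · exact hSint
  have hswap := integral_integral_swap hProdInt
  rw [show (∫ x : ℝ, ∫ y in Set.Ioi (0:ℝ),
      Complex.exp (I * ω * x + I * η * y) *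
        ((max (Real.exp x - N * Real.sqrt (y / T)) 0 : ℝ) : ℂ)) =
      ∫ x : ℝ, ∫ y in Set.Ioi (0:ℝ), P x y from rfl, hswap]
  -- compute the inner x-integral for each y > 0
  set s : ℂ := (3 + I * ω) / 2 with hs
  set z : ℂ := -I * η with hz
  set C : ℂ := ((K : ℝ) : ℂ) ^ (1 + I * ω) / (I * ω - ω ^ 2) with hC
  have hsre : 0 < s.re := by
    rw [hs]
    simp [Complex.div_re, Complex.add_re, Complex.mul_re, Complex.normSq]
    nlinarith [Complex.normSq_pos.2 (two_ne_zero (α := ℂ)), h3]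
  have hzre : 0 < z.re := by
    rw [hz]
    simpa using hη
  have hinner : ∀ y ∈ Ioi (0:ℝ), (∫ x : ℝ, P x y) =
      C * ((y : ℂ) ^ (s - 1) * Complex.exp (-(z * y))) := by
    intro y hy
    have hy0 : (0:ℝ) < y := hy
    have heq1 : (fun x : ℝ => P x y) = fun x : ℝ =>
        Complex.exp (I * η * y) *
          (Complex.exp (I * ω * x) * ((max (Real.exp x - K * Real.sqrt y) 0 : ℝ) : ℂ)) := by
      funext x
      rw [hP]
      simp only
      rw [hsqrt y hy0.le, Complex.exp_add]
      ring
    rw [heq1, integral_const_mul, inner_x (mul_pos hKpos (Real.sqrt_pos.2 hy0)) h1]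
    have hsq : ((K * Real.sqrt y : ℝ) : ℂ) ^ (1 + I * ω) =
        ((K : ℝ) : ℂ) ^ (1 + I * ω) * (y : ℂ) ^ (s - 1) := by
      rw [Complex.ofReal_mul, mul_cpow_ofReal_nonneg hKpos.le (Real.sqrt_nonneg y)]
      congr 1
      have h5 : ((Real.sqrt y : ℝ) : ℂ) = (y : ℂ) ^ ((1:ℂ)/2) := by
        rw [Real.sqrt_eq_rpow, Complex.ofReal_cpow hy0.le]
        norm_num
      rw [h5, ← Complex.cpow_mul]
      · congr 1
        rw [hs]; ring
      · rw [Complex.mul_im, Complex.log_im, Complex.arg_ofReal_of_nonneg hy0.le]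
        simp
        exact Real.pi_pos
      · rw [Complex.mul_im, Complex.log_im, Complex.arg_ofReal_of_nonneg hy0.le]
        simp
        exact Real.pi_pos.le
    rw [hsq]
    have hexpz : Complex.exp (I * η * y) = Complex.exp (-(z * y)) := by
      congr 1
      rw [hz]; ring
    rw [hexpz, hC]
    ring
  rw [setIntegral_congr_fun measurableSet_Ioi hinner, integral_const_mul,
    mellin_cexp hsre hzre]
  have hexp2 : -s = -(3:ℂ)/2 - I * ω / 2 := by rw [hs]; ring
  rw [hexp2, hC, hK]
  ring
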